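/- Let E be a module with a bilinear bracket [·,·] and I : E → E a linear map with vanishing Nijenhuis torsion. Then for every natural number n, the n-th power I^n also has vanishing Nijenhuis torsion with respect to [·,·]. -/

import Mathlib

variable {R : Type*} [CommRing R] {E : Type*} [AddCommGroup E] [Module R E]

/-- The underlying binary operation of a bilinear bracket. -/
def br2 (b : E →ₗ[R] E →ₗ[R] E) : E → E → E := fun x y => b x y

/-- Deformation of a bracket `b` by an endomorphism `I`:
`[X,Y]_I = [IX,Y] + [X,IY] - I [X,Y]`. -/
def deform (I : Module.End R E) (b : E → E → E) : E → E → E :=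
  fun X Y => b (I X) Y + b X (I Y) - I (b X Y)

/-- Nijenhuis torsion of `I` with respect to the bracket `b`. -/
def torsion (I : Module.End R E) (b : E → E → E) : E → E → E :=
  fun X Y => b (I X) (I Y) - I (deform I b X Y)

theorem stmt3 (b : E →ₗ[R] E →ₗ[R] E) (I : Module.End R E)
    (h : ∀ X Y : E, torsion I (br2 b) X Y = 0) (n : ℕ) (X Y : E) :
    torsion (I ^ n) (br2 b) X Y = 0 := by
  have h' : ∀ X Y : E, b (I X) (I Y) = I (b (I X) Y) + I (b X (I Y)) - I (I (b X Y)) := by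
    intro X Y
    have := h X Y
    simp only [torsion, deform, br2, sub_eq_zero] at this
    rw [this]; simp [map_add, map_sub]
  have L1 : ∀ n : ℕ, ∀ X Y : E,
      b (I X) ((I ^ n) Y) = I (b X ((I ^ n) Y)) + (I ^ n) (b (I X) Y) - I ((I ^ n) (b X Y)) := by
    intro n
    induction n with
    | zero => intro X Y; simp
    | succ n ih =>
      intro X Y
      rw [pow_succ' I n]
      simp only [Module.End.mul_apply]
      rw [h' X ((I ^ n) Y), ih X Y]
      simp only [map_add, map_sub]
      abel
  have L2 : ∀ m n : ℕ, ∀ X Y : E,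
      b ((I ^ m) X) ((I ^ n) Y) =
        (I ^ m) (b X ((I ^ n) Y)) + (I ^ n) (b ((I ^ m) X) Y) - (I ^ m) ((I ^ n) (b X Y)) := by
    intro m
    induction m with
    | zero => intro n X Y; simp
    | succ m ih =>
      intro n X Y
      rw [pow_succ' I m]
      simp only [Module.End.mul_apply]
      rw [L1 n ((I ^ m) X) Y, ih n X Y]
      simp only [map_add, map_sub]
      abel
  simp only [torsion, deform, br2, L2 n n X Y, map_add, map_sub]
  abel
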